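/- arXiv:2003.02180 — 2 statements merged into one kernel-verified Lean document; each statement's English description precedes it below -/
import Mathlib

section
/- Let S ∈ ℝ^{3×3} be diagonal. Then for all j ∈ {1,2,3} and all i ≠ k in {1,2,3}: ∫_{SO(3)} Q_{ij} Q_{kj} · etr(SQᵀ) dQ = 0 and ∫_{SO(3)} Q_{ji} Q_{jk} · etr(SQᵀ) dQ = 0; i.e., under the matrix Fisher density with diagonal parameter S, products of two distinct entries of Q lying in the same column or in the same row have zero expectation. -/
open Matrix MeasureTheory Real

noncomputable section

abbrev Mat3 := Matrix (Fin 3) (Fin 3) ℝ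

instance : MeasurableSpace Mat3 :=
  show MeasurableSpace (Fin 3 → Fin 3 → ℝ) from inferInstance

/-- `SO(3)`: real 3×3 matrices with `RᵀR = I` and `det R = 1`. -/
def SO3 : Set Mat3 := {R | Rᵀ * R = 1 ∧ R.det = 1}

/-- The hat map `∧ : ℝ³ → ℝ^{3×3}`, `(hat v) w = v × w`. -/
def hat (v : Fin 3 → ℝ) : Mat3 :=
  !![0, -v 2, v 1; v 2, 0, -v 0; -v 1, v 0, 0]

/-- The vee map `∨`, inverse of the hat map on skew-symmetric matrices. -/
def vee (A : Mat3) : Fin 3 → ℝ := ![A 2 1, A 0 2, A 1 0]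

/-- `ν` is the bi-invariant Haar probability measure on `SO(3)`. -/
def IsHaarSO3 (ν : Measure Mat3) : Prop :=
  IsProbabilityMeasure ν ∧ ν SO3ᶜ = 0 ∧
    (∀ A ∈ SO3, Measure.map (fun R => A * R) ν = ν) ∧
    (∀ A ∈ SO3, Measure.map (fun R => R * A) ν = ν)

/-- The normalizing constant `c(F) = ∫_{SO(3)} etr(FᵀQ) dQ`. -/
def cF (ν : Measure Mat3) (F : Mat3) : ℝ := ∫ Q, Real.exp ((Fᵀ * Q).trace) ∂ν

/-- The tangent-space deviation `ν_R = (QS − SQᵀ)∨`, `Q = UᵀRV`. -/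
def nuR (U S V R : Mat3) : Fin 3 → ℝ :=
  vee ((Uᵀ * R * V) * S - S * (Uᵀ * R * V)ᵀ)

/-- `Σ_c = Σ − P(tr(S)I − S)Pᵀ`. -/
def sigmaC {n : ℕ} (Sig : Matrix (Fin n) (Fin n) ℝ) (P : Matrix (Fin n) (Fin 3) ℝ)
    (S : Mat3) : Matrix (Fin n) (Fin n) ℝ :=
  Sig - P * (S.trace • (1 : Mat3) - S) * Pᵀ

/-- The matrix Fisher–Gaussian density with parameters `(μ, Σ, P, U, S, V)`. -/
def mfg {n : ℕ} (ν : Measure Mat3) (μ : Fin n → ℝ) (Sig : Matrix (Fin n) (Fin n) ℝ)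
    (P : Matrix (Fin n) (Fin 3) ℝ) (U S V : Mat3) (R : Mat3) (x : Fin n → ℝ) : ℝ :=
  (cF ν (U * S * Vᵀ) * Real.sqrt ((2 * Real.pi) ^ n * (sigmaC Sig P S).det))⁻¹ *
    Real.exp (-(1/2) * ((x - (μ + P.mulVec (nuR U S V R))) ⬝ᵥ
      ((sigmaC Sig P S)⁻¹ *ᵥ (x - (μ + P.mulVec (nuR U S V R)))))) *
    Real.exp ((U * S * Vᵀ * Rᵀ).trace)

/-- Sign vector: `+1` at `k`, `-1` elsewhere. -/
def eps (k : Fin 3) : Fin 3 → ℝ := fun m => if m = k then 1 else -1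

lemma eps_sq (k m : Fin 3) : eps k m * eps k m = 1 := by
  unfold eps; split <;> norm_num

lemma eps_self (k : Fin 3) : eps k k = 1 := by simp [eps]

lemma eps_ne {k i : Fin 3} (h : i ≠ k) : eps k i = -1 := by simp [eps, h]

lemma epsD_mem_SO3 (k : Fin 3) : Matrix.diagonal (eps k) ∈ SO3 := by
  constructor
  · rw [Matrix.diagonal_transpose, Matrix.diagonal_mul_diagonal]
    have : (fun m => eps k m * eps k m) = fun _ => (1 : ℝ) := funext (eps_sq k)
    rw [this, Matrix.diagonal_one]
  · rw [Matrix.det_diagonal]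
    fin_cases k <;> simp [eps, Fin.prod_univ_three]

lemma meas_entry (a b : Fin 3) : Measurable fun Q : Mat3 => Q a b :=
  (measurable_pi_apply b).comp (measurable_pi_apply a)

lemma trace_diag_mul (s : Fin 3 → ℝ) (M : Mat3) :
    (Matrix.diagonal s * Mᵀ).trace = ∑ m, s m * M m m := by
  simp [Matrix.trace, Matrix.diag, Matrix.diagonal_mul, Matrix.transpose_apply]

lemma meas_exp_trace (s : Fin 3 → ℝ) :
    Measurable fun Q : Mat3 => Real.exp ((Matrix.diagonal s * Qᵀ).trace) := by
  apply Real.measurable_exp.comp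
  have : (fun Q : Mat3 => (Matrix.diagonal s * Qᵀ).trace)
      = fun Q => ∑ m, s m * Q m m := funext fun Q => trace_diag_mul s Q
  rw [this]
  exact Finset.measurable_sum _ fun m _ => (meas_entry m m).const_mul (s m)

lemma DQD_entry (k : Fin 3) (Q : Mat3) (p q : Fin 3) :
    (Matrix.diagonal (eps k) * Q * Matrix.diagonal (eps k)) p q
      = eps k p * Q p q * eps k q := by
  simp [Matrix.mul_diagonal, Matrix.diagonal_mul]

lemma meas_DQD (k : Fin 3) :
    Measurable fun Q : Mat3 =>
      Matrix.diagonal (eps k) * Q * Matrix.diagonal (eps k) := by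
  apply measurable_pi_lambda
  intro p
  apply measurable_pi_lambda
  intro q
  have : (fun Q : Mat3 =>
      (Matrix.diagonal (eps k) * Q * Matrix.diagonal (eps k)) p q)
      = fun Q => eps k p * Q p q * eps k q := funext fun Q => DQD_entry k Q p q
  exact this ▸ (((meas_entry p q).const_mul (eps k p)).mul_const (eps k q))

lemma key_zero (ν : Measure Mat3) (hν : IsHaarSO3 ν) (s : Fin 3 → ℝ) (k : Fin 3)
    (a b c d : Fin 3) (hcoef : eps k a * eps k b * (eps k c * eps k d) = -1) :
    ∫ Q, Q a b * Q c d * Real.exp ((Matrix.diagonal s * Qᵀ).trace) ∂ν = 0 := by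
  set D : Mat3 := Matrix.diagonal (eps k) with hD
  set f : Mat3 → ℝ :=
    fun Q => Q a b * Q c d * Real.exp ((Matrix.diagonal s * Qᵀ).trace) with hf
  have hmf : Measurable f := ((meas_entry a b).mul (meas_entry c d)).mul (meas_exp_trace s)
  have hDSO := epsD_mem_SO3 k
  have hmapL := hν.2.2.1 D hDSO
  have hmapR := hν.2.2.2 D hDSO
  have hmL : Measurable fun Q : Mat3 => D * Q := by
    apply measurable_pi_lambda; intro p
    apply measurable_pi_lambda; intro q
    have : (fun Q : Mat3 => (D * Q) p q) = fun Q => eps k p * Q p q := by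
      funext Q; simp [hD, Matrix.diagonal_mul]
    exact this ▸ (meas_entry p q).const_mul (eps k p)
  have hmR : Measurable fun Q : Mat3 => Q * D := by
    apply measurable_pi_lambda; intro p
    apply measurable_pi_lambda; intro q
    have : (fun Q : Mat3 => (Q * D) p q) = fun Q => Q p q * eps k q := by
      funext Q; simp [hD, Matrix.mul_diagonal]
    exact this ▸ (meas_entry p q).mul_const (eps k q)
  have hmap : Measure.map (fun Q : Mat3 => D * Q * D) ν = ν := by
    have hcomp : (fun Q : Mat3 => D * Q * D)
        = (fun Q : Mat3 => Q * D) ∘ (fun Q : Mat3 => D * Q) := rfl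
    rw [hcomp, ← Measure.map_map hmR hmL, hmapL, hmapR]
  have h1 : ∫ Q, f Q ∂ν = ∫ Q, f (D * Q * D) ∂ν := by
    conv_lhs => rw [← hmap]
    exact integral_map (meas_DQD k).aemeasurable hmf.aestronglyMeasurable
  have hE : ∀ Q : Mat3,
      (Matrix.diagonal s * (D * Q * D)ᵀ).trace = (Matrix.diagonal s * Qᵀ).trace := by
    intro Q
    rw [trace_diag_mul, trace_diag_mul]
    refine Finset.sum_congr rfl fun m _ => ?_
    rw [hD, DQD_entry, show eps k m * Q m m * eps k m = eps k m * eps k m * Q m m from by ring,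
      eps_sq, one_mul]
  have h2 : ∀ Q : Mat3, f (D * Q * D) = - f Q := by
    intro Q
    have : f (D * Q * D) = (eps k a * eps k b * (eps k c * eps k d)) * f Q := by
      simp only [hf, hD, DQD_entry]
      rw [hE]
      ring
    rw [this, hcoef]; ring
  simp only [h2, integral_neg] at h1
  linarith

/-- For diagonal `S`, products of two distinct entries of `Q` lying in
the same column or in the same row have zero integral against `etr(SQᵀ)` over `SO(3)`. -/
theorem stmt9 (ν : Measure Mat3) (hν : IsHaarSO3 ν)
    (s : Fin 3 → ℝ) (S : Mat3) (hS : S = Matrix.diagonal s) :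
    ∀ j i k : Fin 3, i ≠ k →
      (∫ Q, Q i j * Q k j * Real.exp ((S * Qᵀ).trace) ∂ν = 0) ∧
      (∫ Q, Q j i * Q j k * Real.exp ((S * Qᵀ).trace) ∂ν = 0) := by
  subst hS
  intro j i k hik
  have hsq := eps_sq k j
  have hi := eps_ne hik
  have hk := eps_self k
  constructor
  · exact key_zero ν hν s k i j k j (by rw [hi, hk]; nlinarith)
  · exact key_zero ν hν s k j i j k (by rw [hi, hk]; nlinarith)

end
end

section
/- Let (R, x) be a random variable on SO(3)×ℝⁿ whose law has the matrix Fisher–Gaussian density with parameters (μ, Σ, P, U, S, V). Then the pushforward of this law under the map (R, x) ↦ (Q, y) with Q = UᵀRV and y = Σ_c^{−1/2}(x − μ − Pν_R) has density (c(S)·(2π)^{n/2})⁻¹ · exp(−(1/2)·yᵀy) · etr(SQᵀ) with respect to dQ × Lebesgue measure; i.e., (Q, y) follows the matrix Fisher–Gaussian distribution with parameters (0, I_n, 0, I₃, S, I₃). -/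
open Matrix MeasureTheory Real

noncomputable section

instance : BorelSpace Mat3 := show BorelSpace (Fin 3 → Fin 3 → ℝ) from inferInstance

lemma so3_transpose {U : Mat3} (hU : U ∈ SO3) : Uᵀ ∈ SO3 := by
  obtain ⟨h1, h2⟩ := hU
  have h3 : U * Uᵀ = 1 := mul_eq_one_comm.mp h1
  exact ⟨by simpa using h3, by simpa [Matrix.det_transpose] using h2⟩

lemma so3_mul_self {U : Mat3} (hU : U ∈ SO3) : U * Uᵀ = 1 :=
  mul_eq_one_comm.mp hU.1

lemma continuous_nuR (U S V : Mat3) : Continuous fun R : Mat3 => nuR U S V R := by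
  have hQ : Continuous fun R : Mat3 => Uᵀ * R * V :=
    (continuous_const.matrix_mul continuous_id).matrix_mul continuous_const
  have hM : Continuous fun R : Mat3 => (Uᵀ * R * V) * S - S * (Uᵀ * R * V)ᵀ :=
    (hQ.matrix_mul continuous_const).sub (continuous_const.matrix_mul hQ.matrix_transpose)
  have entry : ∀ (i j : Fin 3), Continuous fun R : Mat3 =>
      ((Uᵀ * R * V) * S - S * (Uᵀ * R * V)ᵀ) i j := fun i j =>
    (continuous_apply j).comp ((continuous_apply i).comp hM)
  unfold nuR vee
  apply continuous_pi
  intro i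
  fin_cases i
  · exact entry 2 1
  · exact entry 0 2
  · exact entry 1 0

variable {n : ℕ}

/-- The change-of-variables map as a measurable equivalence. -/
def Tequiv (μ : Fin n → ℝ) (P : Matrix (Fin n) (Fin 3) ℝ) (U S V : Mat3)
    (A : Matrix (Fin n) (Fin n) ℝ) (hU : U ∈ SO3) (hV : V ∈ SO3) (hdet : IsUnit A.det) :
    (Mat3 × (Fin n → ℝ)) ≃ᵐ (Mat3 × (Fin n → ℝ)) where
  toFun := fun z => (Uᵀ * z.1 * V, A⁻¹ *ᵥ (z.2 - μ - P *ᵥ nuR U S V z.1))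
  invFun := fun w => (U * w.1 * Vᵀ, A *ᵥ w.2 + (μ + P *ᵥ nuR U S V (U * w.1 * Vᵀ)))
  left_inv := by
    intro z
    have h1 : U * (Uᵀ * z.1 * V) * Vᵀ = z.1 := by
      simp only [← Matrix.mul_assoc, so3_mul_self hU, Matrix.one_mul]
      rw [Matrix.mul_assoc, so3_mul_self hV, Matrix.mul_one]
    refine Prod.ext h1 ?_
    show A *ᵥ (A⁻¹ *ᵥ (z.2 - μ - P *ᵥ nuR U S V z.1)) + (μ + P *ᵥ nuR U S V (U * (Uᵀ * z.1 * V) * Vᵀ)) = z.2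
    rw [h1, Matrix.mulVec_mulVec, Matrix.mul_nonsing_inv _ hdet, Matrix.one_mulVec]
    abel
  right_inv := by
    intro w
    have h1 : Uᵀ * (U * w.1 * Vᵀ) * V = w.1 := by
      simp only [← Matrix.mul_assoc, hU.1, Matrix.one_mul]
      rw [Matrix.mul_assoc, hV.1, Matrix.mul_one]
    refine Prod.ext h1 ?_
    show A⁻¹ *ᵥ (A *ᵥ w.2 + (μ + P *ᵥ nuR U S V (U * w.1 * Vᵀ)) - μ - P *ᵥ nuR U S V (U * w.1 * Vᵀ)) = w.2
    have h2 : A *ᵥ w.2 + (μ + P *ᵥ nuR U S V (U * w.1 * Vᵀ)) - μ - P *ᵥ nuR U S V (U * w.1 * Vᵀ)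
        = A *ᵥ w.2 := by abel
    rw [h2, Matrix.mulVec_mulVec, Matrix.nonsing_inv_mul _ hdet, Matrix.one_mulVec]
  measurable_toFun := by
    have h1 : Continuous fun z : Mat3 × (Fin n → ℝ) => Uᵀ * z.1 * V :=
      (continuous_const.matrix_mul continuous_fst).matrix_mul continuous_const
    have h2 : Continuous fun z : Mat3 × (Fin n → ℝ) =>
        A⁻¹ *ᵥ (z.2 - μ - P *ᵥ nuR U S V z.1) :=
      continuous_const.matrix_mulVec
        ((continuous_snd.sub continuous_const).sub
          (continuous_const.matrix_mulVec ((continuous_nuR U S V).comp continuous_fst)))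
    exact (h1.prodMk h2).measurable
  measurable_invFun := by
    have h1 : Continuous fun w : Mat3 × (Fin n → ℝ) => U * w.1 * Vᵀ :=
      (continuous_const.matrix_mul continuous_fst).matrix_mul continuous_const
    have h2 : Continuous fun w : Mat3 × (Fin n → ℝ) =>
        A *ᵥ w.2 + (μ + P *ᵥ nuR U S V (U * w.1 * Vᵀ)) :=
      (continuous_const.matrix_mulVec continuous_snd).add
        (continuous_const.add (continuous_const.matrix_mulVec ((continuous_nuR U S V).comp h1)))
    exact (h1.prodMk h2).measurable

lemma map_conj {ν : Measure Mat3} (hν : IsHaarSO3 ν) {U V : Mat3}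
    (hU : U ∈ SO3) (hV : V ∈ SO3) :
    Measure.map (fun R : Mat3 => Uᵀ * R * V) ν = ν := by
  have hm1 : Measurable fun R : Mat3 => Uᵀ * R :=
    (continuous_const.matrix_mul continuous_id).measurable
  have hm2 : Measurable fun R : Mat3 => R * V :=
    (continuous_id.matrix_mul continuous_const).measurable
  have hcomp : (fun R : Mat3 => Uᵀ * R * V) = (fun R => R * V) ∘ (fun R => Uᵀ * R) := rfl
  rw [hcomp, ← Measure.map_map hm2 hm1, hν.2.2.1 Uᵀ (so3_transpose hU), hν.2.2.2 V hV]

lemma map_affine (A : Matrix (Fin n) (Fin n) ℝ) (hdet : A.det ≠ 0) (b : Fin n → ℝ) :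
    Measure.map (fun x : Fin n → ℝ => A⁻¹ *ᵥ (x - b)) volume
      = ENNReal.ofReal |A.det| • volume := by
  have hmv : Measurable fun x : Fin n → ℝ => A⁻¹ *ᵥ x :=
    (continuous_const.matrix_mulVec continuous_id).measurable
  have hsub : Measurable fun x : Fin n → ℝ => x - b :=
    (continuous_id.sub continuous_const).measurable
  have hcomp : (fun x : Fin n → ℝ => A⁻¹ *ᵥ (x - b))
      = (fun x : Fin n → ℝ => A⁻¹ *ᵥ x) ∘ (fun x => x - b) := rfl
  rw [hcomp, ← Measure.map_map hmv hsub]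
  have hb : (fun x : Fin n → ℝ => x - b) = fun x => x + (-b) := by
    funext x; rw [sub_eq_add_neg]
  rw [hb, map_add_right_eq_self volume (-b)]
  have hlin : (fun x : Fin n → ℝ => A⁻¹ *ᵥ x) = ⇑(Matrix.toLin' A⁻¹) := by
    funext x; rw [Matrix.toLin'_apply]
  have hdet' : LinearMap.det (Matrix.toLin' A⁻¹) ≠ 0 := by
    rw [LinearMap.det_toLin']
    rw [Matrix.det_nonsing_inv]
    simpa [Ring.inverse_eq_inv'] using inv_ne_zero hdet
  rw [hlin, Real.map_linearMap_volume_pi_eq_smul_volume_pi hdet']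
  congr 1
  rw [LinearMap.det_toLin', Matrix.det_nonsing_inv, Ring.inverse_eq_inv']
  simp [abs_inv]

lemma map_T_prod {ν : Measure Mat3} (hν : IsHaarSO3 ν) (μ : Fin n → ℝ)
    (P : Matrix (Fin n) (Fin 3) ℝ) (U S V : Mat3) (A : Matrix (Fin n) (Fin n) ℝ)
    (hU : U ∈ SO3) (hV : V ∈ SO3) (hdet : IsUnit A.det) :
    Measure.map (⇑(Tequiv μ P U S V A hU hV hdet)) (ν.prod volume)
      = ENNReal.ofReal |A.det| • (ν.prod volume) := by
  haveI : IsProbabilityMeasure ν := hν.1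
  set T := Tequiv μ P U S V A hU hV hdet with hT
  have hdet0 : A.det ≠ 0 := hdet.ne_zero
  have hφ : Measurable fun R : Mat3 => Uᵀ * R * V :=
    ((continuous_const.matrix_mul continuous_id).matrix_mul continuous_const).measurable
  ext E hE
  rw [Measure.map_apply T.measurable hE, Measure.smul_apply, smul_eq_mul,
    Measure.prod_apply (T.measurable hE), Measure.prod_apply hE]
  have key : ∀ R : Mat3, volume (Prod.mk R ⁻¹' (⇑T ⁻¹' E))
      = ENNReal.ofReal |A.det| * volume (Prod.mk (Uᵀ * R * V) ⁻¹' E) := by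
    intro R
    have hg : Measurable fun x : Fin n → ℝ => A⁻¹ *ᵥ (x - (μ + P *ᵥ nuR U S V R)) :=
      (continuous_const.matrix_mulVec (continuous_id.sub continuous_const)).measurable
    have hset : Prod.mk R ⁻¹' (⇑T ⁻¹' E)
        = (fun x : Fin n → ℝ => A⁻¹ *ᵥ (x - (μ + P *ᵥ nuR U S V R))) ⁻¹'
            (Prod.mk (Uᵀ * R * V) ⁻¹' E) := by
      ext x
      simp only [Set.mem_preimage, hT, Tequiv, MeasurableEquiv.coe_mk, Equiv.coe_fn_mk]
      rw [sub_sub]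
    rw [hset, ← Measure.map_apply hg (measurable_prodMk_left hE),
      map_affine A hdet0 (μ + P *ᵥ nuR U S V R), Measure.smul_apply, smul_eq_mul]
  calc ∫⁻ R, volume (Prod.mk R ⁻¹' (⇑T ⁻¹' E)) ∂ν
      = ∫⁻ R, ENNReal.ofReal |A.det| * volume (Prod.mk (Uᵀ * R * V) ⁻¹' E) ∂ν :=
        lintegral_congr key
    _ = ENNReal.ofReal |A.det| * ∫⁻ R, volume (Prod.mk (Uᵀ * R * V) ⁻¹' E) ∂ν :=
        lintegral_const_mul _ ((measurable_measure_prodMk_left hE).comp hφ)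
    _ = ENNReal.ofReal |A.det| * ∫⁻ Q, volume (Prod.mk Q ⁻¹' E) ∂ν := by
        rw [← lintegral_map (measurable_measure_prodMk_left hE) hφ, map_conj hν hU hV]

lemma map_withDensity_equiv {α β : Type*} [MeasurableSpace α] [MeasurableSpace β]
    (T : α ≃ᵐ β) (m : Measure α) (g : β → ENNReal) (hg : Measurable g) :
    Measure.map (⇑T) (m.withDensity (g ∘ ⇑T)) = (Measure.map (⇑T) m).withDensity g := by
  ext E hE
  rw [Measure.map_apply T.measurable hE, withDensity_apply _ hE,
    withDensity_apply _ (T.measurable hE), setLIntegral_map hE hg T.measurable]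
  rfl

lemma cF_conj {ν : Measure Mat3} (hν : IsHaarSO3 ν) {U V S : Mat3}
    (hU : U ∈ SO3) (hV : V ∈ SO3) (hS : Sᵀ = S) : cF ν (U * S * Vᵀ) = cF ν S := by
  unfold cF
  have hmap : Measure.map (fun R : Mat3 => U * R * Vᵀ) ν = ν := by
    have h := map_conj hν (so3_transpose hU) (so3_transpose hV)
    simpa [Matrix.transpose_transpose] using h
  have hφ : Measurable fun R : Mat3 => U * R * Vᵀ :=
    ((continuous_const.matrix_mul continuous_id).matrix_mul continuous_const).measurable
  have hcont : Continuous fun Q : Mat3 => Real.exp (((U * S * Vᵀ)ᵀ * Q).trace) := by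
    apply Real.continuous_exp.comp
    exact Continuous.matrix_trace (continuous_const.matrix_mul continuous_id)
  conv_lhs => rw [← hmap]
  rw [integral_map hφ.aemeasurable hcont.aestronglyMeasurable]
  congr 1
  funext Q
  congr 1
  have : (U * S * Vᵀ)ᵀ * (U * Q * Vᵀ) = V * (S * Q) * Vᵀ := by
    rw [Matrix.transpose_mul, Matrix.transpose_mul, Matrix.transpose_transpose, hS]
    simp only [Matrix.mul_assoc]
    rw [← Matrix.mul_assoc Uᵀ U, hU.1, Matrix.one_mul]
  rw [this, hS, Matrix.trace_mul_cycle, hV.1, Matrix.one_mul]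

lemma posSemidef_det_nonneg {m : Type*} [Fintype m] [DecidableEq m]
    {M : Matrix m m ℝ} (hM : M.PosSemidef) : 0 ≤ M.det := by
  rw [hM.isHermitian.det_eq_prod_eigenvalues]
  exact Finset.prod_nonneg fun i _ => by simpa using hM.eigenvalues_nonneg i

/-- The pushforward of the MFG law under
`(R, x) ↦ (Q, y) = (UᵀRV, Σ_c^{−1/2}(x − μ − Pν_R))` has density
`(c(S)(2π)^{n/2})⁻¹ exp(−yᵀy/2) etr(SQᵀ)` w.r.t. `dQ × Lebesgue`; i.e. `(Q, y)`
follows the MFG distribution with parameters `(0, Iₙ, 0, I₃, S, I₃)`. -/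
theorem stmt11 (n : ℕ) (ν : Measure Mat3) (hν : IsHaarSO3 ν)
    (μ : Fin n → ℝ) (Sig : Matrix (Fin n) (Fin n) ℝ) (P : Matrix (Fin n) (Fin 3) ℝ)
    (U V : Mat3) (hU : U ∈ SO3) (hV : V ∈ SO3)
    (s : Fin 3 → ℝ) (S : Mat3) (hS : S = Matrix.diagonal s)
    (hSig : Sig.IsSymm) (hc : (sigmaC Sig P S).PosDef)
    (A : Matrix (Fin n) (Fin n) ℝ) (hA : A = (hc.posSemidef.1.eigenvectorUnitary : Matrix (Fin n) (Fin n) ℝ) *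
      diagonal ((RCLike.ofReal : ℝ → ℝ) ∘ Real.sqrt ∘ hc.posSemidef.1.eigenvalues) *
      (star hc.posSemidef.1.eigenvectorUnitary : Matrix (Fin n) (Fin n) ℝ)) :
    Measure.map
        (fun z : Mat3 × (Fin n → ℝ) =>
          (Uᵀ * z.1 * V, A⁻¹ *ᵥ (z.2 - μ - P *ᵥ nuR U S V z.1)))
        ((ν.prod volume).withDensity fun z =>
          ENNReal.ofReal (mfg ν μ Sig P U S V z.1 z.2))
      = (ν.prod volume).withDensity fun z =>
          ENNReal.ofReal ((cF ν S * Real.sqrt ((2 * Real.pi) ^ n))⁻¹ *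
            Real.exp (-(1/2) * (z.2 ⬝ᵥ z.2)) * Real.exp ((S * z.1ᵀ).trace)) := by
  haveI : IsProbabilityMeasure ν := hν.1
  have hAps : A.PosSemidef := by
    rw [hA]
    exact (PosSemidef.diagonal (fun i => by simp [Real.sqrt_nonneg])).mul_mul_conjTranspose_same _
  have hAA : A * A = sigmaC Sig P S := by
    have hM : sigmaC Sig P S = (hc.posSemidef.1.eigenvectorUnitary : Matrix (Fin n) (Fin n) ℝ) *
        diagonal ((RCLike.ofReal : ℝ → ℝ) ∘ hc.posSemidef.1.eigenvalues) *
        (star hc.posSemidef.1.eigenvectorUnitary : Matrix (Fin n) (Fin n) ℝ) := by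
      have h := hc.posSemidef.1.spectral_theorem
      rw [Unitary.conjStarAlgAut_apply] at h
      exact h
    have hW : (star hc.posSemidef.1.eigenvectorUnitary : Matrix (Fin n) (Fin n) ℝ) *
        (hc.posSemidef.1.eigenvectorUnitary : Matrix (Fin n) (Fin n) ℝ) = 1 :=
      Unitary.star_mul_self_of_mem hc.posSemidef.1.eigenvectorUnitary.2
    have hD : diagonal ((RCLike.ofReal : ℝ → ℝ) ∘ Real.sqrt ∘ hc.posSemidef.1.eigenvalues) *
        diagonal ((RCLike.ofReal : ℝ → ℝ) ∘ Real.sqrt ∘ hc.posSemidef.1.eigenvalues)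
        = diagonal ((RCLike.ofReal : ℝ → ℝ) ∘ hc.posSemidef.1.eigenvalues) := by
      rw [diagonal_mul_diagonal]
      congr 1; funext i
      simp [Real.mul_self_sqrt (hc.posSemidef.eigenvalues_nonneg i)]
    have key : ∀ W sW D D2 : Matrix (Fin n) (Fin n) ℝ, sW * W = 1 → D * D = D2 →
        W * D * sW * (W * D * sW) = W * D2 * sW := by
      intro W sW D D2 h1 h2
      simp only [Matrix.mul_assoc]
      rw [← Matrix.mul_assoc sW W, h1, Matrix.one_mul, ← Matrix.mul_assoc D D, h2]
    rw [hA]; exact Eq.trans (key _ _ _ _ hW hD) hM.symm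
  have hdet2 : A.det * A.det = (sigmaC Sig P S).det := by rw [← Matrix.det_mul, hAA]
  have hdnn : (0:ℝ) ≤ A.det := posSemidef_det_nonneg hAps
  have hdpos : (0:ℝ) < A.det := by
    rcases hdnn.lt_or_eq with h | h
    · exact h
    · exfalso
      have h2 := hc.det_pos
      rw [← hdet2, ← h] at h2
      simp at h2
  have hdne : A.det ≠ 0 := hdpos.ne'
  have hdetU : IsUnit A.det := isUnit_iff_ne_zero.mpr hdne
  have hAsym : Aᵀ = A := by
    rw [← Matrix.conjTranspose_eq_transpose_of_trivial]; exact hAps.isHermitian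
  have hsqrtd : Real.sqrt ((sigmaC Sig P S).det) = A.det := by
    rw [← hdet2, Real.sqrt_mul_self hdnn]
  have hST : Sᵀ = S := by rw [hS, Matrix.diagonal_transpose]
  set T := Tequiv μ P U S V A hU hV hdetU with hTdef
  have hfun : (fun z : Mat3 × (Fin n → ℝ) =>
      (Uᵀ * z.1 * V, A⁻¹ *ᵥ (z.2 - μ - P *ᵥ nuR U S V z.1))) = ⇑T := rfl
  rw [hfun]
  have hconts : Continuous fun z : Mat3 × (Fin n → ℝ) => mfg ν μ Sig P U S V z.1 z.2 := by
    unfold mfg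
    have hv : Continuous fun z : Mat3 × (Fin n → ℝ) =>
        z.2 - (μ + P.mulVec (nuR U S V z.1)) :=
      continuous_snd.sub (continuous_const.add
        (continuous_const.matrix_mulVec ((continuous_nuR U S V).comp continuous_fst)))
    refine ((continuous_const.mul (Real.continuous_exp.comp ?_)).mul
      (Real.continuous_exp.comp ?_))
    · exact continuous_const.mul
        (hv.dotProduct (continuous_const.matrix_mulVec hv))
    · exact Continuous.matrix_trace
        (continuous_const.matrix_mul continuous_fst.matrix_transpose)
  set ρ : Mat3 × (Fin n → ℝ) → ENNReal :=
    fun z => ENNReal.ofReal (mfg ν μ Sig P U S V z.1 z.2) with hρ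
  have hρm : Measurable ρ := ENNReal.measurable_ofReal.comp hconts.measurable
  have hρeq : ρ = (ρ ∘ ⇑T.symm) ∘ ⇑T := by
    funext z
    simp [Function.comp, T.symm_apply_apply]
  rw [hρeq, map_withDensity_equiv T _ _ (hρm.comp T.symm.measurable),
    map_T_prod hν μ P U S V A hU hV hdetU, withDensity_smul_measure,
    ← withDensity_smul' _ _ ENNReal.ofReal_ne_top]
  congr 1
  funext z
  have hsymm : T.symm z =
      (U * z.1 * Vᵀ, A *ᵥ z.2 + (μ + P *ᵥ nuR U S V (U * z.1 * Vᵀ))) := rfl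
  simp only [Pi.smul_apply, Function.comp, smul_eq_mul, hsymm, hρ]
  rw [← ENNReal.ofReal_mul (abs_nonneg _)]
  congr 1
  -- the real identity
  unfold mfg
  have hx : A *ᵥ z.2 + (μ + P *ᵥ nuR U S V (U * z.1 * Vᵀ))
      - (μ + P.mulVec (nuR U S V (U * z.1 * Vᵀ))) = A *ᵥ z.2 := add_sub_cancel_right _ _
  rw [hx]
  have hq : (A *ᵥ z.2) ⬝ᵥ ((sigmaC Sig P S)⁻¹ *ᵥ (A *ᵥ z.2)) = z.2 ⬝ᵥ z.2 := by
    have h1 : (sigmaC Sig P S)⁻¹ = A⁻¹ * A⁻¹ := by rw [← hAA, Matrix.mul_inv_rev]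
    rw [h1, Matrix.mulVec_mulVec, Matrix.mul_assoc, Matrix.nonsing_inv_mul _ hdetU,
      Matrix.mul_one, Matrix.dotProduct_mulVec, ← Matrix.mulVec_transpose,
      Matrix.transpose_nonsing_inv, hAsym, Matrix.mulVec_mulVec,
      Matrix.nonsing_inv_mul _ hdetU, Matrix.one_mulVec]
  have htr : (U * S * Vᵀ * (U * z.1 * Vᵀ)ᵀ).trace = (S * z.1ᵀ).trace := by
    have h2 : U * S * Vᵀ * (U * z.1 * Vᵀ)ᵀ = U * (S * z.1ᵀ) * Uᵀ := by
      simp only [Matrix.transpose_mul, Matrix.transpose_transpose, Matrix.mul_assoc]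
      rw [← Matrix.mul_assoc Vᵀ V, hV.1, Matrix.one_mul]
    rw [h2, Matrix.trace_mul_cycle, ← Matrix.mul_assoc, hU.1, Matrix.one_mul]
  rw [hq, htr, cF_conj hν hU hV hST]
  have hsplit : Real.sqrt ((2 * Real.pi) ^ n * (sigmaC Sig P S).det)
      = Real.sqrt ((2 * Real.pi) ^ n) * A.det := by
    rw [Real.sqrt_mul (by positivity), hsqrtd]
  rw [hsplit, abs_of_pos hdpos]
  have hconst : A.det * (cF ν S * (Real.sqrt ((2 * Real.pi) ^ n) * A.det))⁻¹
      = (cF ν S * Real.sqrt ((2 * Real.pi) ^ n))⁻¹ := by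
    rw [mul_inv, mul_inv]
    calc A.det * ((cF ν S)⁻¹ * ((Real.sqrt ((2 * Real.pi) ^ n))⁻¹ * A.det⁻¹))
        = (A.det * A.det⁻¹) * ((cF ν S)⁻¹ * (Real.sqrt ((2 * Real.pi) ^ n))⁻¹) := by ring
      _ = (cF ν S * Real.sqrt ((2 * Real.pi) ^ n))⁻¹ := by
          rw [mul_inv_cancel₀ hdne, one_mul, ← mul_inv]
  calc A.det * ((cF ν S * (Real.sqrt ((2 * Real.pi) ^ n) * A.det))⁻¹
        * Real.exp (-(1/2) * (z.2 ⬝ᵥ z.2)) * Real.exp ((S * z.1ᵀ).trace))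
      = (A.det * (cF ν S * (Real.sqrt ((2 * Real.pi) ^ n) * A.det))⁻¹)
        * Real.exp (-(1/2) * (z.2 ⬝ᵥ z.2)) * Real.exp ((S * z.1ᵀ).trace) := by ring
    _ = (cF ν S * Real.sqrt ((2 * Real.pi) ^ n))⁻¹
        * Real.exp (-(1/2) * (z.2 ⬝ᵥ z.2)) * Real.exp ((S * z.1ᵀ).trace) := by rw [hconst]


end
end
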